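/- Let u : ℝ → ℤ → ℝ be differentiable in t and satisfy u̇ₙ = uₙ[uₙ₊₁(uₙ₊₂ − uₙ) + uₙ₋₁(uₙ − uₙ₋₂)]. Define v t n = u t (n+1) · u t n. Then v satisfies the double Volterra equation v̇ₙ = vₙ(vₙ₊₂ − vₙ₋₂). -/

import Mathlib

/-- Transformation T2 maps equation (E1) to the double Volterra equation (3.5). -/
theorem stmt_3 (u v : ℝ → ℤ → ℝ)
    (hu : ∀ t n, HasDerivAt (fun s => u s n)
      (u t n * (u t (n + 1) * (u t (n + 2) - u t n) + u t (n - 1) * (u t n - u t (n - 2)))) t)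
    (hv : ∀ t n, v t n = u t (n + 1) * u t n) :
    ∀ t n, HasDerivAt (fun s => v s n) (v t n * (v t (n + 2) - v t (n - 2))) t := by
  intro t n
  have h := (hu t (n + 1)).mul (hu t n)
  have hfun : (fun s => v s n) = fun s => u s (n + 1) * u s n := by
    funext s; exact hv s n
  rw [hfun]
  refine h.congr_deriv ?_
  rw [hv t n, hv t (n + 2), hv t (n - 2)]
  have e1 : n + 1 + 1 = n + 2 := by ring
  have e2 : n + 1 + 2 = n + 3 := by ring
  have e3 : n + 1 - 1 = n := by ring
  have e4 : n + 1 - 2 = n - 1 := by ring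
  have e5 : n + 2 + 1 = n + 3 := by ring
  have e6 : n - 2 + 1 = n - 1 := by ring
  rw [e1, e2, e3, e4, e5, e6]
  ring
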